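/- Let V be a finite ground set, let α ∈ (0, 1], let k ≥ 1 be an integer, and set κ := (1/k)·log(1/α). Let ϕ : ℝ → ℝ be twice differentiable with ϕ'(x) ≥ 0 and ϕ''(x) ≤ κ · ϕ'(x) for all x ≥ 0, and let m : V → [0, 1]. Define F(S) := ϕ(∑_{s∈S} m(s)). Then F is monotone, and F(s|S) ≥ α · F(s|T) for all S ⊆ T ⊆ V with |T| ≤ k and all s ∈ V \ T. -/

import Mathlib

/-- if `ϕ` is twice differentiable with `ϕ' ≥ 0` and `ϕ'' ≤ κ·ϕ'` on `[0,∞)`,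
where `κ = (1/k)·log(1/α)`, and `m : V → [0,1]`, then `F(S) = ϕ(∑_{s∈S} m(s))` is monotone
and satisfies `F(s|S) ≥ α·F(s|T)` for all `S ⊆ T` with `|T| ≤ k` and `s ∉ T`. -/
theorem alpha_submodular_of_differential_inequality
    {V : Type*} [Fintype V] [DecidableEq V]
    (α : ℝ) (hα : α ∈ Set.Ioc (0 : ℝ) 1)
    (k : ℕ) (hk : 1 ≤ k)
    (κ : ℝ) (hκ : κ = (1 / (k : ℝ)) * Real.log (1 / α))
    (ϕ ϕ' ϕ'' : ℝ → ℝ)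
    (hd1 : ∀ x : ℝ, HasDerivAt ϕ (ϕ' x) x)
    (hd2 : ∀ x : ℝ, HasDerivAt ϕ' (ϕ'' x) x)
    (hϕ'_nonneg : ∀ x : ℝ, 0 ≤ x → 0 ≤ ϕ' x)
    (hϕ'' : ∀ x : ℝ, 0 ≤ x → ϕ'' x ≤ κ * ϕ' x)
    (m : V → ℝ) (hm : ∀ v, m v ∈ Set.Icc (0 : ℝ) 1)
    (F : Finset V → ℝ) (hF : ∀ S, F S = ϕ (∑ s ∈ S, m s)) :
    (∀ (S : Finset V) (s : V), s ∉ S → 0 ≤ F (insert s S) - F S) ∧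
    (∀ (S T : Finset V) (s : V), S ⊆ T → T.card ≤ k → s ∉ T →
      α * (F (insert s T) - F T) ≤ F (insert s S) - F S) := by
  obtain ⟨hα0, hα1⟩ := hα
  have hk0 : (0:ℝ) < (k:ℝ) := by exact_mod_cast hk
  have hlog : 0 ≤ Real.log (1 / α) :=
    Real.log_nonneg (by rw [le_div_iff₀ hα0]; linarith)
  have hκ0 : 0 ≤ κ := by rw [hκ]; positivity
  have hϕcont : Continuous ϕ := by
    rw [continuous_iff_continuousAt]; exact fun x => (hd1 x).continuousAt
  have hϕ'cont : Continuous ϕ' := by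
    rw [continuous_iff_continuousAt]; exact fun x => (hd2 x).continuousAt
  -- ϕ is monotone on [0, ∞)
  have hmono : MonotoneOn ϕ (Set.Ici 0) := by
    apply monotoneOn_of_deriv_nonneg (convex_Ici 0) hϕcont.continuousOn
    · intro x _; exact (hd1 x).differentiableAt.differentiableWithinAt
    · intro x hx
      rw [interior_Ici] at hx
      rw [(hd1 x).deriv]
      exact hϕ'_nonneg x (le_of_lt hx)
  -- key Grönwall bound
  have key : ∀ a b : ℝ, 0 ≤ a → a ≤ b → ϕ' b ≤ Real.exp (κ * (b - a)) * ϕ' a := by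
    intro a b ha hab
    have hder : ∀ x : ℝ, HasDerivAt (fun x => Real.exp (-κ * x) * ϕ' x)
        (Real.exp (-κ * x) * (-κ) * ϕ' x + Real.exp (-κ * x) * ϕ'' x) x := by
      intro x
      have := ((((hasDerivAt_id x).const_mul (-κ)).exp).mul (hd2 x))
      simpa [Pi.mul_def] using this
    have hanti : AntitoneOn (fun x => Real.exp (-κ * x) * ϕ' x) (Set.Ici 0) := by
      apply antitoneOn_of_deriv_nonpos (convex_Ici 0)
      · exact ((Real.continuous_exp.comp (continuous_const.mul continuous_id)).mul
          hϕ'cont).continuousOn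
      · intro x _; exact (hder x).differentiableAt.differentiableWithinAt
      · intro x hx
        rw [interior_Ici] at hx
        rw [(hder x).deriv]
        have h1 := hϕ'' x hx.le
        have h2 := Real.exp_pos (-κ * x)
        nlinarith
    have h1 : Real.exp (-κ * b) * ϕ' b ≤ Real.exp (-κ * a) * ϕ' a :=
      hanti (Set.mem_Ici.2 ha) (Set.mem_Ici.2 (ha.trans hab)) hab
    have e1 : Real.exp (κ * b) * Real.exp (-κ * b) = 1 := by
      rw [← Real.exp_add]; norm_num
    calc ϕ' b = Real.exp (κ * b) * (Real.exp (-κ * b) * ϕ' b) := by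
          rw [← mul_assoc, e1, one_mul]
      _ ≤ Real.exp (κ * b) * (Real.exp (-κ * a) * ϕ' a) :=
          mul_le_mul_of_nonneg_left h1 (Real.exp_pos _).le
      _ = Real.exp (κ * (b - a)) * ϕ' a := by
          rw [← mul_assoc, ← Real.exp_add]; ring_nf
  have hexpk : Real.exp (κ * k) = 1 / α := by
    rw [hκ]
    have : 1 / (k:ℝ) * Real.log (1 / α) * k = Real.log (1 / α) := by
      field_simp
    rw [this, Real.exp_log (by positivity)]
  constructor
  · -- monotonicity
    intro S s hs
    rw [hF, hF, Finset.sum_insert hs, sub_nonneg]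
    have ha : 0 ≤ ∑ x ∈ S, m x :=
      Finset.sum_nonneg fun x _ => (hm x).1
    have hc : 0 ≤ m s := (hm s).1
    exact hmono (Set.mem_Ici.2 ha) (Set.mem_Ici.2 (by linarith)) (by linarith)
  · intro S T s hST hTk hsT
    have hsS : s ∉ S := fun h => hsT (hST h)
    set a := ∑ x ∈ S, m x with ha_def
    set b := ∑ x ∈ T, m x with hb_def
    set c := m s with hc_def
    have ha0 : 0 ≤ a := Finset.sum_nonneg fun x _ => (hm x).1
    have hab : a ≤ b :=
      Finset.sum_le_sum_of_subset_of_nonneg hST fun x _ _ => (hm x).1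
    have hbk : b ≤ (k:ℝ) := by
      calc b ≤ ∑ _x ∈ T, (1:ℝ) := Finset.sum_le_sum fun x _ => (hm x).2
        _ = T.card := by simp
        _ ≤ (k:ℝ) := by exact_mod_cast hTk
    have hc0 : 0 ≤ c := (hm s).1
    -- ψ is monotone on [0,∞)
    have hψder : ∀ t : ℝ, HasDerivAt
        (fun t => (ϕ (a + t) - ϕ a) - α * (ϕ (b + t) - ϕ b))
        (ϕ' (a + t) - α * ϕ' (b + t)) t := by
      intro t
      have h1 : HasDerivAt (fun t => ϕ (a + t)) (ϕ' (a + t)) t := by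
        have := (hd1 (a + t)).comp t ((hasDerivAt_id t).const_add a)
        simpa [Function.comp_def] using this
      have h2 : HasDerivAt (fun t => ϕ (b + t)) (ϕ' (b + t)) t := by
        have := (hd1 (b + t)).comp t ((hasDerivAt_id t).const_add b)
        simpa [Function.comp_def] using this
      simpa [mul_comm, Pi.sub_def] using ((h1.sub_const (ϕ a)).sub
        (((h2.sub_const (ϕ b)).const_mul α)))
    have hψmono : MonotoneOn
        (fun t => (ϕ (a + t) - ϕ a) - α * (ϕ (b + t) - ϕ b)) (Set.Ici 0) := by
      apply monotoneOn_of_deriv_nonneg (convex_Ici 0)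
      · exact (((hϕcont.comp (continuous_const.add continuous_id)).sub
          continuous_const).sub (continuous_const.mul
          ((hϕcont.comp (continuous_const.add continuous_id)).sub
          continuous_const))).continuousOn
      · intro t _; exact (hψder t).differentiableAt.differentiableWithinAt
      · intro t ht
        rw [interior_Ici] at ht
        rw [(hψder t).deriv]
        have hkey := key (a + t) (b + t) (by linarith [(Set.mem_Ioi.1 ht).le]) (by linarith)
        have heq : (b + t) - (a + t) = b - a := by ring
        rw [heq] at hkey
        have hle : Real.exp (κ * (b - a)) ≤ 1 / α := by
          rw [← hexpk]
          exact Real.exp_le_exp.2 (mul_le_mul_of_nonneg_left (by linarith) hκ0)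
        have hϕ'a : 0 ≤ ϕ' (a + t) := hϕ'_nonneg _ (by linarith [(Set.mem_Ioi.1 ht).le])
        have : ϕ' (b + t) ≤ (1 / α) * ϕ' (a + t) :=
          hkey.trans (mul_le_mul_of_nonneg_right hle hϕ'a)
        have h2 := mul_le_mul_of_nonneg_left this hα0.le
        rw [← mul_assoc, mul_one_div, div_self (ne_of_gt hα0), one_mul] at h2
        linarith
    have h0 : (fun t => (ϕ (a + t) - ϕ a) - α * (ϕ (b + t) - ϕ b)) 0 = 0 := by
      simp
    have hfin := hψmono (Set.mem_Ici.2 le_rfl) (Set.mem_Ici.2 hc0) hc0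
    rw [h0] at hfin
    rw [hF, hF, hF, hF, Finset.sum_insert hsS, Finset.sum_insert hsT]
    simp only [← ha_def, ← hb_def, ← hc_def] at hfin ⊢
    have e1 : c + a = a + c := by ring
    have e2 : c + b = b + c := by ring
    rw [e1, e2]
    linarith
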